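/- Let d, p ≥ 1 and let d_tile ≥ 1 divide d, writing T = d/d_tile, and for x ∈ ℝ^d write x^{(1)}, …, x^{(T)} ∈ ℝ^{d_tile} for its consecutive tiles. Define the tiled symmetric power tspow_p : ℝ^d → ℝ^{C(T+p−1,p) · d_tile^p} as the concatenation, over non-decreasing tile multi-indices τ = (τ_1 ≤ ⋯ ≤ τ_p) ∈ NDMI^p_T, of the blocks √(p! / ∏_{k=1}^T hist_k(τ)!) · flatten(x^{(τ_1)} ⊗ ⋯ ⊗ x^{(τ_p)}). Then for all q, k ∈ ℝ^d, ⟨tspow_p(q), tspow_p(k)⟩ = (⟨q, k⟩)^p. -/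

import Mathlib

open scoped Classical

/-- hist_k(τ): the number of positions j with τ_j = k. -/
def hist {p T : ℕ} (τ : Fin p → Fin T) (k : Fin T) : ℕ :=
  (Finset.univ.filter (fun j => τ j = k)).card

/-- The τ-th consecutive tile x^{(τ)} ∈ ℝ^{d_tile} of a vector x ∈ ℝ^{T·d_tile}:
its r-th entry is x_{τ·d_tile + r}. -/
def tile {dt T : ℕ} (x : Fin (T * dt) → ℝ) (τ : Fin T) (r : Fin dt) : ℝ :=
  x ⟨τ.1 * dt + r.1, by
    have h1 : τ.1 + 1 ≤ T := τ.isLt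
    have h2 : r.1 < dt := r.isLt
    calc τ.1 * dt + r.1 < τ.1 * dt + dt := by omega
      _ = (τ.1 + 1) * dt := by ring
      _ ≤ T * dt := Nat.mul_le_mul_right dt h1⟩

private lemma ofFn_get_cast {α : Type*} {p : ℕ} (l : List α) (h : l.length = p) :
    List.ofFn (fun j : Fin p => l.get (Fin.cast h.symm j)) = l := by
  subst h; simpa using List.ofFn_get l

private lemma count_ofFn {p T : ℕ} (τ : Fin p → Fin T) (s : Fin T) :
    (↑(List.ofFn τ) : Multiset (Fin T)).count s = hist τ s := by
  rw [← Fin.univ_val_map, Multiset.count_map, hist, Finset.card, Finset.filter_val]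
  congr 1
  exact Multiset.filter_congr (fun a _ => eq_comm)

private lemma multinomial_eval {p T : ℕ} (τ : Fin p → Fin T) :
    ((p.factorial : ℝ) / ∏ s, ((hist τ s).factorial : ℝ))
      = ((↑(List.ofFn τ) : Multiset (Fin T)).countPerms : ℝ) := by
  classical
  set m : Multiset (Fin T) := ↑(List.ofFn τ) with hm
  have hcard : Multiset.card m = p := by simp [hm]
  have hmn : Multiset.countPerms m = Nat.multinomial m.toFinset m.count := by
    rw [Multiset.countPerms, Finsupp.multinomial_eq]
    congr 1
  have hprod : (∏ s, ((hist τ s).factorial : ℝ))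
      = ∏ s ∈ m.toFinset, ((m.count s).factorial : ℝ) := by
    rw [Finset.prod_subset (Finset.subset_univ m.toFinset)]
    · exact Finset.prod_congr rfl fun s _ => by rw [hm, count_ofFn]
    · intro s _ hs
      have h0 : Multiset.count s m = 0 := by
        rwa [Multiset.count_eq_zero, ← Multiset.mem_toFinset]
      rw [h0]
      norm_num
  have hspec := Nat.multinomial_spec m.toFinset m.count
  rw [Multiset.toFinset_sum_count_eq, hcard] at hspec
  have hne : (∏ s ∈ m.toFinset, ((m.count s).factorial : ℝ)) ≠ 0 := by
    positivity
  rw [hmn, hprod, div_eq_iff hne]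
  rw [← hspec]
  push_cast
  ring

/-- Let d = T · d_tile with d_tile ≥ 1 (so d_tile divides d and
T = d / d_tile), and p ≥ 1. The tiled symmetric power tspow_p concatenates,
over non-decreasing tile multi-indices τ ∈ NDMI^p_T, the blocks
√(p! / ∏_k hist_k(τ)!) · flatten(x^{(τ_1)} ⊗ ⋯ ⊗ x^{(τ_p)}).  Then for all
q, k ∈ ℝ^d, ⟨tspow_p(q), tspow_p(k)⟩ = (⟨q, k⟩)^p. -/
theorem tspow_inner_product (p dt T : ℕ) (hp : 1 ≤ p) (hdt : 1 ≤ dt)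
    (hd : 1 ≤ T * dt) (q k : Fin (T * dt) → ℝ) :
    ∑ τ : {f : Fin p → Fin T // Monotone f}, ∑ i : Fin p → Fin dt,
        (Real.sqrt ((p.factorial : ℝ) / ∏ s, ((hist τ.1 s).factorial : ℝ))
            * ∏ j, tile q (τ.1 j) (i j))
          * (Real.sqrt ((p.factorial : ℝ) / ∏ s, ((hist τ.1 s).factorial : ℝ))
            * ∏ j, tile k (τ.1 j) (i j))
      = (∑ a, q a * k a) ^ p := by
    classical
  set c : Fin T → ℝ := fun s => ∑ r, tile q s r * tile k s r with hcdef
  have step1 : ∀ τ : {f : Fin p → Fin T // Monotone f},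
      (∑ i : Fin p → Fin dt,
        (Real.sqrt ((p.factorial : ℝ) / ∏ s, ((hist τ.1 s).factorial : ℝ))
            * ∏ j, tile q (τ.1 j) (i j))
          * (Real.sqrt ((p.factorial : ℝ) / ∏ s, ((hist τ.1 s).factorial : ℝ))
            * ∏ j, tile k (τ.1 j) (i j)))
      = ((↑(List.ofFn τ.1) : Multiset (Fin T)).countPerms : ℝ)
          * ((↑(List.ofFn τ.1) : Multiset (Fin T)).map c).prod := by
    intro τ
    have hA : (0:ℝ) ≤ (p.factorial : ℝ) / ∏ s, ((hist τ.1 s).factorial : ℝ) := by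
      positivity
    have hmap : ((↑(List.ofFn τ.1) : Multiset (Fin T)).map c).prod = ∏ j, c (τ.1 j) := by
      rw [← Fin.univ_val_map, Multiset.map_map]
      rfl
    rw [hmap, ← multinomial_eval]
    simp only [mul_mul_mul_comm, Real.mul_self_sqrt hA]
    rw [← Finset.mul_sum]
    congr 1
    simp only [← Finset.prod_mul_distrib, hcdef]
    exact (Fintype.prod_sum fun j r => tile q (τ.1 j) r * tile k (τ.1 j) r).symm
  have step2 : ∑ τ : {f : Fin p → Fin T // Monotone f},
        ((↑(List.ofFn τ.1) : Multiset (Fin T)).countPerms : ℝ)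
          * ((↑(List.ofFn τ.1) : Multiset (Fin T)).map c).prod
      = ∑ m ∈ (Finset.univ : Finset (Fin T)).sym p,
          (m.1.countPerms : ℝ) * (m.1.map c).prod := by
    refine Finset.sum_bij
      (fun (τ : {f : Fin p → Fin T // Monotone f}) _ =>
        (⟨↑(List.ofFn τ.1), by simp⟩ : Sym (Fin T) p)) ?_ ?_ ?_ ?_
    · intro τ _
      exact Finset.mem_sym_iff.2 fun a _ => Finset.mem_univ a
    · intro τ₁ _ τ₂ _ h
      apply Subtype.ext
      apply List.ofFn_injective
      refine List.Perm.eq_of_pairwise' τ₁.2.sortedLE_ofFn.pairwise τ₂.2.sortedLE_ofFn.pairwise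
        (Multiset.coe_eq_coe.1 ?_)
      exact congrArg Subtype.val h
    · intro m hm
      have hlen : (Multiset.sort m.1 (·≤·)).length = p := by
        rw [Multiset.length_sort, m.2]
      refine ⟨⟨fun j => (Multiset.sort m.1 (·≤·)).get (Fin.cast hlen.symm j), ?_⟩,
        Finset.mem_univ _, ?_⟩
      · intro a b hab
        exact (Multiset.pairwise_sort (s := m.1) (r := (·≤·))).sortedLE.monotone_get (show Fin.cast hlen.symm a ≤ Fin.cast hlen.symm b from hab)
      · apply Subtype.ext
        show (↑(List.ofFn fun j : Fin p =>
          (Multiset.sort m.1 (·≤·)).get (Fin.cast hlen.symm j)) : Multiset (Fin T)) = m.1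
        rw [ofFn_get_cast _ hlen, Multiset.sort_eq]
    · intro τ _
      rfl
  have hbase : ∑ s, c s = ∑ a, q a * k a := by
    rw [← Equiv.sum_comp (finProdFinEquiv : Fin T × Fin dt ≃ Fin (T * dt))
      (fun a => q a * k a), Fintype.sum_prod_type]
    refine Finset.sum_congr rfl fun s _ => ?_
    rw [hcdef]
    refine Finset.sum_congr rfl fun r _ => ?_
    have ht : ∀ x : Fin (T * dt) → ℝ, tile x s r = x (finProdFinEquiv (s, r)) := by
      intro x
      unfold tile
      congr 1
      apply Fin.ext
      simp [finProdFinEquiv]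
      ring
    rw [ht q, ht k]
  rw [Finset.sum_congr rfl fun τ _ => step1 τ, step2, ← Finset.sum_pow, hbase]
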